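/- Let d ≥ 1 and k be positive integers, let 0 < ε < 1/2, and set g = 2·15^(d−1). Suppose N ≥ ε^(−g·k^(d−1)) · k^(g·k^(d−1)) and suppose f : [N]^d → ℝ is an injective d-consistent array. Then for every set S ⊆ [N]^d with |S| ≥ ε·N^d there exist sets A_1, …, A_d ⊆ [N] with |A_i| = k for each i and A_1 × ⋯ × A_d ⊆ S such that the restriction of f to A_1 × ⋯ × A_d is a monotone subarray of size [k]^d. -/

import Mathlib

open Finset

/-- `M` is a chain on which `v` increases with the order of `α`. -/
def MBXChainUp {α : Type*} [LT α] (v : α → ℝ) (M : Finset α) : Prop :=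
  ∀ a ∈ M, ∀ b ∈ M, a < b → v a < v b

/-- `M` is a chain on which `v` decreases with the order of `α`. -/
def MBXChainDown {α : Type*} [LT α] (v : α → ℝ) (M : Finset α) : Prop :=
  ∀ a ∈ M, ∀ b ∈ M, a < b → v b < v a

theorem MBXChainUp.mono {α : Type*} [LT α] {v : α → ℝ} {M M' : Finset α}
    (h : MBXChainUp v M) (h' : M' ⊆ M) : MBXChainUp v M' :=
  fun a ha b hb hab => h a (h' ha) b (h' hb) hab

theorem MBXChainDown.mono {α : Type*} [LT α] {v : α → ℝ} {M M' : Finset α}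
    (h : MBXChainDown v M) (h' : M' ⊆ M) : MBXChainDown v M' :=
  fun a ha b hb hab => h a (h' ha) b (h' hb) hab

/-- Erdős–Szekeres for finsets: a set of size at least `(k-1)² + 1` on which `v` is
injective contains a monotone subset of size `k`. -/
theorem mbx_erdos_szekeres {α : Type*} [LinearOrder α] (v : α → ℝ) (P : Finset α) (k : ℕ)
    (hinj : Set.InjOn v ↑P) (hP : (k - 1) * (k - 1) + 1 ≤ P.card) :
    ∃ M, M ⊆ P ∧ M.card = k ∧ (MBXChainUp v M ∨ MBXChainDown v M) := by
  classical
  set up : α → Finset (Finset α) := fun a =>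
    P.powerset.filter fun M => a ∈ M ∧ (∀ b ∈ M, b ≤ a) ∧ MBXChainUp v M with hup
  set dn : α → Finset (Finset α) := fun a =>
    P.powerset.filter fun M => a ∈ M ∧ (∀ b ∈ M, b ≤ a) ∧ MBXChainDown v M with hdn
  set L : α → ℕ := fun a => (up a).sup Finset.card with hL
  set D : α → ℕ := fun a => (dn a).sup Finset.card with hD
  have hsingup : ∀ a ∈ P, {a} ∈ up a := by
    intro a ha
    refine mem_filter.2 ⟨mem_powerset.2 (singleton_subset_iff.2 ha), mem_singleton_self a, ?_, ?_⟩
    · intro b hb; rw [mem_singleton] at hb; exact le_of_eq hb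
    · intro x hx y hy hxy
      rw [mem_singleton] at hx hy; subst hx; subst hy; exact absurd hxy (lt_irrefl _)
  have hsingdn : ∀ a ∈ P, {a} ∈ dn a := by
    intro a ha
    refine mem_filter.2 ⟨mem_powerset.2 (singleton_subset_iff.2 ha), mem_singleton_self a, ?_, ?_⟩
    · intro b hb; rw [mem_singleton] at hb; exact le_of_eq hb
    · intro x hx y hy hxy
      rw [mem_singleton] at hx hy; subst hx; subst hy; exact absurd hxy (lt_irrefl _)
  have hL1 : ∀ a ∈ P, 1 ≤ L a := by
    intro a ha
    have h := Finset.le_sup (f := Finset.card) (hsingup a ha)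
    rwa [card_singleton] at h
  have hD1 : ∀ a ∈ P, 1 ≤ D a := by
    intro a ha
    have h := Finset.le_sup (f := Finset.card) (hsingdn a ha)
    rwa [card_singleton] at h
  have hLstep : ∀ a ∈ P, ∀ b ∈ P, a < b → v a < v b → L a + 1 ≤ L b := by
    intro a ha b hb hab hv
    obtain ⟨M, hM, hMcard⟩ := Finset.exists_mem_eq_sup (up a) ⟨{a}, hsingup a ha⟩ Finset.card
    simp only [hup, mem_filter, mem_powerset] at hM
    obtain ⟨hMP, haM, hle, hchain⟩ := hM
    have hbM : b ∉ M := fun hbM => absurd hab (not_lt_of_ge (hle b hbM))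
    have hmem : insert b M ∈ up b := by
      simp only [hup, mem_filter, mem_powerset]
      refine ⟨insert_subset hb hMP, mem_insert_self _ _, ?_, ?_⟩
      · intro c hc
        rcases mem_insert.1 hc with rfl | hc
        · exact le_rfl
        · exact (hle c hc).trans hab.le
      · intro x hx y hy hxy
        rcases mem_insert.1 hx with hx' | hx'
        · rcases mem_insert.1 hy with hy' | hy'
          · exact absurd hxy (by rw [hx', hy']; exact lt_irrefl _)
          · exact absurd hxy (not_lt_of_ge (by rw [hx']; exact (hle y hy').trans hab.le))
        · rcases mem_insert.1 hy with hy' | hy'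
          · rw [hy']
            rcases eq_or_lt_of_le (hle x hx') with hxa | hxa
            · rw [hxa]; exact hv
            · exact (hchain x hx' a haM hxa).trans hv
          · exact hchain x hx' y hy' hxy
    have hfin := Finset.le_sup (f := Finset.card) hmem
    rw [card_insert_of_notMem hbM, ← hMcard] at hfin
    exact hfin
  have hDstep : ∀ a ∈ P, ∀ b ∈ P, a < b → v b < v a → D a + 1 ≤ D b := by
    intro a ha b hb hab hv
    obtain ⟨M, hM, hMcard⟩ := Finset.exists_mem_eq_sup (dn a) ⟨{a}, hsingdn a ha⟩ Finset.card
    simp only [hdn, mem_filter, mem_powerset] at hM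
    obtain ⟨hMP, haM, hle, hchain⟩ := hM
    have hbM : b ∉ M := fun hbM => absurd hab (not_lt_of_ge (hle b hbM))
    have hmem : insert b M ∈ dn b := by
      simp only [hdn, mem_filter, mem_powerset]
      refine ⟨insert_subset hb hMP, mem_insert_self _ _, ?_, ?_⟩
      · intro c hc
        rcases mem_insert.1 hc with rfl | hc
        · exact le_rfl
        · exact (hle c hc).trans hab.le
      · intro x hx y hy hxy
        rcases mem_insert.1 hx with hx' | hx'
        · rcases mem_insert.1 hy with hy' | hy'
          · exact absurd hxy (by rw [hx', hy']; exact lt_irrefl _)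
          · exact absurd hxy (not_lt_of_ge (by rw [hx']; exact (hle y hy').trans hab.le))
        · rcases mem_insert.1 hy with hy' | hy'
          · rw [hy']
            rcases eq_or_lt_of_le (hle x hx') with hxa | hxa
            · rw [hxa]; exact hv
            · exact hv.trans (hchain x hx' a haM hxa)
          · exact hchain x hx' y hy' hxy
    have hfin := Finset.le_sup (f := Finset.card) hmem
    rw [card_insert_of_notMem hbM, ← hMcard] at hfin
    exact hfin
  by_cases hbigL : ∃ a ∈ P, k ≤ L a
  · obtain ⟨a, ha, hka⟩ := hbigL
    obtain ⟨M, hM, hMcard⟩ := Finset.exists_mem_eq_sup (up a) ⟨{a}, hsingup a ha⟩ Finset.card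
    simp only [hup, mem_filter, mem_powerset] at hM
    obtain ⟨M', hM'M, hM'card⟩ := Finset.exists_subset_card_eq (show k ≤ M.card from hMcard ▸ hka)
    exact ⟨M', hM'M.trans hM.1, hM'card, Or.inl (hM.2.2.2.mono hM'M)⟩
  by_cases hbigD : ∃ a ∈ P, k ≤ D a
  · obtain ⟨a, ha, hka⟩ := hbigD
    obtain ⟨M, hM, hMcard⟩ := Finset.exists_mem_eq_sup (dn a) ⟨{a}, hsingdn a ha⟩ Finset.card
    simp only [hdn, mem_filter, mem_powerset] at hM
    obtain ⟨M', hM'M, hM'card⟩ := Finset.exists_subset_card_eq (show k ≤ M.card from hMcard ▸ hka)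
    exact ⟨M', hM'M.trans hM.1, hM'card, Or.inr (hM.2.2.2.mono hM'M)⟩
  push_neg at hbigL hbigD
  exfalso
  have hmaps : ∀ a ∈ P, (L a, D a) ∈ (Finset.Icc 1 (k-1)) ×ˢ (Finset.Icc 1 (k-1)) := by
    intro a ha
    simp only [mem_product, mem_Icc]
    exact ⟨⟨hL1 a ha, Nat.le_sub_one_of_lt (hbigL a ha)⟩,
      ⟨hD1 a ha, Nat.le_sub_one_of_lt (hbigD a ha)⟩⟩
  have hcard : ((Finset.Icc 1 (k-1)) ×ˢ (Finset.Icc 1 (k-1))).card < P.card := by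
    rw [card_product, Nat.card_Icc]
    calc (k - 1 + 1 - 1) * (k - 1 + 1 - 1) = (k-1)*(k-1) := by simp
    _ < P.card := hP
  obtain ⟨x, hx, y, hy, hxy, hfxy⟩ :=
    Finset.exists_ne_map_eq_of_card_lt_of_maps_to hcard hmaps
  have key : ∀ x ∈ P, ∀ y ∈ P, x < y → (L x, D x) = (L y, D y) → False := by
    intro x hx y hy hlt heq
    have h1 : L x = L y := congrArg Prod.fst heq
    have h2 : D x = D y := congrArg Prod.snd heq
    have hvne : v x ≠ v y := fun h => (ne_of_lt hlt) (hinj hx hy h)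
    rcases lt_or_gt_of_ne hvne with hv | hv
    · have := hLstep x hx y hy hlt hv; omega
    · have := hDstep x hx y hy hlt hv; omega
  rcases lt_or_gt_of_ne hxy with h | h
  · exact key x hx y hy h hfxy
  · exact key y hy x hx h hfxy.symm

attribute [local instance] Classical.propDecidable

/-- Supersaturated Erdős–Szekeres: a set `R` with injective values contains at least
`C(|R|,k) / C(K,k)` monotone `k`-subsets, where `K = (k-1)²+1`. -/
theorem mbx_supersat {α : Type*} [LinearOrder α] (v : α → ℝ) (R : Finset α) (k : ℕ)
    (hinj : Set.InjOn v ↑R) (hKR : (k - 1) * (k - 1) + 1 ≤ R.card) :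
    R.card.choose k ≤
      (((R.powersetCard k).filter (fun M => MBXChainUp v M)).card +
       ((R.powersetCard k).filter (fun M => MBXChainDown v M)).card) *
        ((k - 1) * (k - 1) + 1).choose k := by
  classical
  set K := (k - 1) * (k - 1) + 1 with hK
  have hkK : k ≤ K := by
    have h : ∀ n : ℕ, n ≤ n * n := by
      intro n
      rcases n with _ | m
      · omega
      · exact Nat.le_mul_of_pos_left _ (Nat.succ_pos m)
    have := h (k - 1)
    omega
  have hch : ∀ P : Finset α, ∃ M : Finset α,
      P ∈ R.powersetCard K → (M ⊆ P ∧ M.card = k ∧ (MBXChainUp v M ∨ MBXChainDown v M)) := by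
    intro P
    by_cases h : P ∈ R.powersetCard K
    · rw [Finset.mem_powersetCard] at h
      obtain ⟨M, h1, h2, h3⟩ := mbx_erdos_szekeres v P k
        (hinj.mono (by exact_mod_cast h.1)) (le_of_eq h.2.symm)
      exact ⟨M, fun _ => ⟨h1, h2, h3⟩⟩
    · exact ⟨∅, fun hc => absurd hc h⟩
  choose φ hφ using hch
  have key : (R.powersetCard K).card ≤
      (R.card - k).choose (K - k) * ((R.powersetCard K).image φ).card := by
    apply Finset.card_le_mul_card_image
    intro M hM
    rw [Finset.mem_image] at hM
    obtain ⟨P₀, hP₀, hP₀M⟩ := hM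
    have hMsub : M ⊆ R ∧ M.card = k := by
      obtain ⟨h1, h2, _⟩ := hφ P₀ hP₀
      have hP₀R := (Finset.mem_powersetCard.1 hP₀).1
      exact ⟨hP₀M ▸ (h1.trans hP₀R), hP₀M ▸ h2⟩
    calc (Finset.filter (fun x => φ x = M) (R.powersetCard K)).card
        ≤ ((R \ M).powersetCard (K - k)).card := by
          apply Finset.card_le_card_of_injOn (fun P => P \ M)
          · intro P hP
            rw [Finset.mem_coe, Finset.mem_filter] at hP
            obtain ⟨hPmem, hPφ⟩ := hP
            obtain ⟨hsub, _, _⟩ := hφ P hPmem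
            rw [hPφ] at hsub
            rw [Finset.mem_powersetCard] at hPmem
            rw [Finset.mem_coe, Finset.mem_powersetCard]
            constructor
            · exact Finset.sdiff_subset_sdiff hPmem.1 (le_refl M)
            · rw [Finset.card_sdiff_of_subset hsub, hPmem.2, hMsub.2]
          · intro P₁ h₁ P₂ h₂ heq
            rw [Finset.mem_coe, Finset.mem_filter] at h₁ h₂
            obtain ⟨hm₁, he₁⟩ := h₁
            obtain ⟨hm₂, he₂⟩ := h₂
            obtain ⟨hs₁, _, _⟩ := hφ P₁ hm₁
            obtain ⟨hs₂, _, _⟩ := hφ P₂ hm₂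
            rw [he₁] at hs₁
            rw [he₂] at hs₂
            have := congrArg (fun X => X ∪ M) heq
            simpa [Finset.sdiff_union_of_subset hs₁, Finset.sdiff_union_of_subset hs₂] using this
      _ = (R.card - k).choose (K - k) := by
          rw [Finset.card_powersetCard, Finset.card_sdiff_of_subset hMsub.1, hMsub.2]
  rw [Finset.card_powersetCard] at key
  have himg : ((R.powersetCard K).image φ).card ≤
      ((R.powersetCard k).filter (fun M => MBXChainUp v M)).card +
       ((R.powersetCard k).filter (fun M => MBXChainDown v M)).card := by
    refine le_trans (Finset.card_le_card ?_) (Finset.card_union_le _ _)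
    intro M hM
    rw [Finset.mem_image] at hM
    obtain ⟨P₀, hP₀, hP₀M⟩ := hM
    obtain ⟨h1, h2, h3⟩ := hφ P₀ hP₀
    have hP₀R := (Finset.mem_powersetCard.1 hP₀).1
    have hMk : M ∈ R.powersetCard k := by
      rw [Finset.mem_powersetCard]
      exact ⟨hP₀M ▸ h1.trans hP₀R, hP₀M ▸ h2⟩
    rw [Finset.mem_union, Finset.mem_filter, Finset.mem_filter]
    rcases h3 with h3 | h3
    · exact Or.inl ⟨hMk, hP₀M ▸ h3⟩
    · exact Or.inr ⟨hMk, hP₀M ▸ h3⟩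
  have hmulid : R.card.choose K * K.choose k = R.card.choose k * (R.card - k).choose (K - k) :=
    Nat.choose_mul hkK
  have hfibpos : 0 < (R.card - k).choose (K - k) :=
    Nat.choose_pos (by omega)
  have hle : R.card.choose k * (R.card - k).choose (K - k) ≤
      ((((R.powersetCard k).filter (fun M => MBXChainUp v M)).card +
       ((R.powersetCard k).filter (fun M => MBXChainDown v M)).card) * K.choose k) *
        (R.card - k).choose (K - k) := by
    rw [← hmulid]
    calc R.card.choose K * K.choose k
        ≤ ((R.card - k).choose (K - k) * ((R.powersetCard K).image φ).card) * K.choose k := by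
          exact Nat.mul_le_mul_right _ key
      _ ≤ _ := by
          rw [mul_comm ((R.card - k).choose (K - k)) _, mul_assoc, mul_comm _ (K.choose k),
            ← mul_assoc]
          exact Nat.mul_le_mul_right _ (Nat.mul_le_mul_right _ himg)
  exact Nat.le_of_mul_le_mul_right hle hfibpos

lemma mbx_zpow_neg (ε : ℝ) (n : ℕ) : ε ^ (-(n:ℤ)) = (1/ε) ^ n := by
  rw [zpow_neg, zpow_natCast, one_div, inv_pow]




/-- `x` lies in the box `A₁ × ⋯ × A_d`. -/
def InBox {d N : ℕ} (A : Fin d → Finset (Fin N)) (x : Fin d → Fin N) : Prop :=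
  ∀ i : Fin d, x i ∈ A i

/-- The restriction of the array `f` to the box `A₁ × ⋯ × A_d` is monotone:
for each direction `i`, either `f` is strictly increasing in the `i`-th
coordinate for every fixed choice of the other coordinates, or strictly
decreasing in it for every fixed choice of the other coordinates. -/
def MonotoneArrayOn {d N : ℕ} (f : (Fin d → Fin N) → ℝ)
    (A : Fin d → Finset (Fin N)) : Prop :=
  ∀ i : Fin d,
    (∀ x y : Fin d → Fin N, InBox A x → InBox A y →
        (∀ j : Fin d, j ≠ i → x j = y j) → x i < y i → f x < f y) ∨
    (∀ x y : Fin d → Fin N, InBox A x → InBox A y →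
        (∀ j : Fin d, j ≠ i → x j = y j) → x i < y i → f y < f x)

/-- The restriction of the injective array `f` to the box `A₁ × ⋯ × A_d` is
`d`-consistent.  This is the unfolded form of the recursive definition
(1-consistent = monotone; `d`-consistent = all hyperplane slices carry the same
`(d-1)`-consistent order pattern): (a) the lines in the first direction are
uniformly increasing or uniformly decreasing, and (b) for every `i`, the
comparison `f x < f y` for points `x, y` of the box agreeing in all coordinates
`> i` depends only on their coordinates `≤ i`. -/
def ConsistentArrayOn {d N : ℕ} (f : (Fin d → Fin N) → ℝ)
    (A : Fin d → Finset (Fin N)) : Prop :=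
  (∀ i : Fin d, i.val = 0 →
    ((∀ x y : Fin d → Fin N, InBox A x → InBox A y →
        (∀ j : Fin d, j ≠ i → x j = y j) → x i < y i → f x < f y) ∨
     (∀ x y : Fin d → Fin N, InBox A x → InBox A y →
        (∀ j : Fin d, j ≠ i → x j = y j) → x i < y i → f y < f x))) ∧
  (∀ i : Fin d, ∀ x y x' y' : Fin d → Fin N,
    InBox A x → InBox A y → InBox A x' → InBox A y' →
    (∀ j : Fin d, i < j → x j = y j) → (∀ j : Fin d, i < j → x' j = y' j) →
    (∀ j : Fin d, j ≤ i → x j = x' j) → (∀ j : Fin d, j ≤ i → y j = y' j) →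
    (f x < f y ↔ f x' < f y'))

/-- Lemma 3.1: with `g = 2·15^(d-1)`, if `N ≥ ε^(-g·k^(d-1)) · k^(g·k^(d-1))`
and `f : [N]^d → ℝ` is an injective `d`-consistent array, then every
`S ⊆ [N]^d` of size at least `ε·N^d` contains a monotone subarray of size
`[k]^d`. -/
lemma mbx_scale (ε : ℝ) (hε0 : 0 < ε) (x : ℝ) (m : ℕ) (hm : 1 ≤ m) :
    ε * ((1/ε)^m * x) = (1/ε)^(m-1) * x := by
  obtain ⟨m', rfl⟩ : ∃ m', m = m' + 1 := ⟨m - 1, by omega⟩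
  have hε' : ε ≠ 0 := ne_of_gt hε0
  simp only [Nat.add_sub_cancel, pow_succ]
  field_simp

lemma mbx_num1 {ε : ℝ} (hε0 : 0 < ε) (hε : ε < 1/2) {kR : ℝ} (hk1 : 1 ≤ kR) {NR : ℝ}
    {m : ℕ} (hm : 3 ≤ m) (hN : (1/ε)^m * kR^m ≤ NR) : 4 * kR^2 ≤ ε * NR := by
  have h2ε : (2:ℝ) ≤ 1/ε := by rw [le_div_iff₀ hε0]; linarith
  have h4 : (4:ℝ) ≤ (1/ε)^(m-1) := by
    calc (4:ℝ) = 2^2 := by norm_num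
    _ ≤ 2^(m-1) := by apply pow_le_pow_right₀ (by norm_num) (by omega)
    _ ≤ (1/ε)^(m-1) := by apply pow_le_pow_left₀ (by norm_num) h2ε
  have h5 : kR^2 ≤ kR^m := pow_le_pow_right₀ hk1 (by omega)
  have key : ε * ((1/ε)^m * kR^m) = (1/ε)^(m-1) * kR^m := mbx_scale ε hε0 _ m (by omega)
  calc 4 * kR^2 ≤ (1/ε)^(m-1) * kR^m := by nlinarith
  _ = ε * ((1/ε)^m * kR^m) := key.symm
  _ ≤ ε * NR := mul_le_mul_of_nonneg_left hN hε0.le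

lemma mbx_num_rec {ε : ℝ} (hε0 : 0 < ε) (hε : ε < 1/2) (k : ℕ) (hk : 0 < k) (NR : ℝ)
    (G' : ℕ) (hN : (1/ε)^(15*k*G') * (k:ℝ)^(15*k*G') ≤ NR) :
    (1/(ε^(k+1)/(4^(k+2)*(k:ℝ)^(2*k))))^G' * (k:ℝ)^G' ≤ NR := by
  have hk1 : (1:ℝ) ≤ (k:ℝ) := by exact_mod_cast hk
  have h2ε : (2:ℝ) ≤ 1/ε := by rw [le_div_iff₀ hε0]; linarith
  have h1ε : (1:ℝ) ≤ 1/ε := by linarith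
  have hεk : (0:ℝ) < ε^(k+1) := by positivity
  have hden : (0:ℝ) < 4^(k+2)*(k:ℝ)^(2*k) := by positivity
  have hrw : 1/(ε^(k+1)/(4^(k+2)*(k:ℝ)^(2*k))) = 4^(k+2)*(k:ℝ)^(2*k) * (1/ε)^(k+1) := by
    rw [one_div, inv_div]
    rw [div_eq_mul_inv, ← inv_pow, ← one_div]
  have hstep : 4^(k+2)*(k:ℝ)^(2*k) * (1/ε)^(k+1) ≤ (1/ε)^(3*k+5) * (k:ℝ)^(2*k) := by
    have h4 : (4:ℝ)^(k+2) ≤ ((1/ε)^2)^(k+2) := by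
      apply pow_le_pow_left₀ (by norm_num)
      nlinarith
    have : ((1/ε)^2)^(k+2) = (1/ε)^(2*k+4) := by rw [← pow_mul]; ring_nf
    rw [this] at h4
    calc 4^(k+2)*(k:ℝ)^(2*k) * (1/ε)^(k+1)
        ≤ (1/ε)^(2*k+4)*(k:ℝ)^(2*k) * (1/ε)^(k+1) := by
          have hx : (0:ℝ) ≤ (k:ℝ)^(2*k) * (1/ε)^(k+1) := by positivity
          nlinarith [pow_pos (lt_of_lt_of_le zero_lt_one h1ε) (k+1),
            pow_pos (lt_of_lt_of_le zero_lt_one hk1) (2*k)]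
      _ = (1/ε)^(3*k+5) * (k:ℝ)^(2*k) := by
          rw [mul_assoc, mul_comm ((k:ℝ)^(2*k)) _, ← mul_assoc, ← pow_add]
          ring_nf
  have hpos₂ : (0:ℝ) ≤ 1/(ε^(k+1)/(4^(k+2)*(k:ℝ)^(2*k))) := by positivity
  calc (1/(ε^(k+1)/(4^(k+2)*(k:ℝ)^(2*k))))^G' * (k:ℝ)^G'
      ≤ ((1/ε)^(3*k+5) * (k:ℝ)^(2*k))^G' * (k:ℝ)^G' := by
        apply mul_le_mul_of_nonneg_right _ (by positivity)
        apply pow_le_pow_left₀ hpos₂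
        rw [hrw]; exact hstep
    _ = (1/ε)^((3*k+5)*G') * (k:ℝ)^((2*k)*G') * (k:ℝ)^G' := by
        rw [mul_pow, ← pow_mul, ← pow_mul]
    _ = (1/ε)^((3*k+5)*G') * (k:ℝ)^((2*k)*G' + G') := by
        rw [mul_assoc, ← pow_add]
    _ ≤ (1/ε)^(15*k*G') * (k:ℝ)^(15*k*G') := by
        apply mul_le_mul
        · apply pow_le_pow_right₀ h1ε
          have : 3*k+5 ≤ 15*k := by omega
          exact Nat.mul_le_mul_right G' this
        · apply pow_le_pow_right₀ hk1
          have : (2*k)*G' + G' = (2*k+1)*G' := by ring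
          rw [this]
          apply Nat.mul_le_mul_right G'
          omega
        · positivity
        · positivity
    _ ≤ NR := hN


set_option maxHeartbeats 1000000 in
theorem consistent_array_monotone_box (d : ℕ) (hd : 0 < d) (k : ℕ)
    (hk : 0 < k) (ε : ℝ) (hε0 : 0 < ε) (hε : ε < 1 / 2) (N : ℕ)
    (hN : ε ^ (-((2 * 15 ^ (d - 1) * k ^ (d - 1) : ℕ) : ℤ)) *
        (k : ℝ) ^ (2 * 15 ^ (d - 1) * k ^ (d - 1)) ≤ (N : ℝ))
    (f : (Fin d → Fin N) → ℝ) (hf : Function.Injective f)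
    (hcons : ConsistentArrayOn f (fun _ => Finset.univ))
    (S : Finset (Fin d → Fin N)) (hS : ε * (N : ℝ) ^ d ≤ (S.card : ℝ)) :
    ∃ A : Fin d → Finset (Fin N),
      (∀ i : Fin d, (A i).card = k) ∧
      (∀ x : Fin d → Fin N, InBox A x → x ∈ S) ∧
      MonotoneArrayOn f A := by
  classical
  induction d generalizing ε N with
  | zero => exact absurd hd (lt_irrefl 0)
  | succ d ih =>
    simp only [Nat.add_sub_cancel] at hN
    rcases Nat.eq_zero_or_pos d with rfl | hd0
    · -- base case : dimension 1
      have he2 : 2 * 15 ^ (0:ℕ) * k ^ (0:ℕ) = 2 := by norm_num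
      rw [he2, mbx_zpow_neg] at hN
      have hk1 : (1:ℝ) ≤ (k:ℝ) := by exact_mod_cast hk
      have h2 : (2:ℝ) ≤ 1/ε := by
        rw [le_div_iff₀ hε0]; linarith
      have hεN : (k : ℝ) ≤ ε * (N:ℝ) ^ (0+1) := by
        have hc : (k:ℝ) ≤ 2 * (k:ℝ)^2 := by nlinarith
        have hc2 : (2:ℝ) * (k:ℝ)^2 ≤ (1/ε) * (k:ℝ)^2 := by
          apply mul_le_mul_of_nonneg_right h2 (by positivity)
        have hc3 : ε * ((1/ε)^2 * (k:ℝ)^2) = (1/ε) * (k:ℝ)^2 := by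
          field_simp
        have hc4 : ε * ((1/ε)^2 * (k:ℝ)^2) ≤ ε * (N:ℝ) := by
          apply mul_le_mul_of_nonneg_left _ hε0.le
          exact_mod_cast hN
        rw [pow_one]
        linarith
      have hkS : k ≤ S.card := by
        have := hεN.trans hS
        exact_mod_cast this
      set g : (Fin (0+1) → Fin N) → Fin N := fun x => x 0 with hg
      have hginj : Function.Injective g := by
        intro x y h
        funext i
        have hi : i = 0 := Fin.fin_one_eq_zero i
        rw [hi]; exact h
      have himg : (S.image g).card = S.card := Finset.card_image_of_injective S hginj
      obtain ⟨A₀, hA₀sub, hA₀card⟩ :=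
        Finset.exists_subset_card_eq (show k ≤ (S.image g).card from himg ▸ hkS)
      refine ⟨fun _ => A₀, fun i => hA₀card, ?_, ?_⟩
      · intro x hx
        have hx0 : x 0 ∈ A₀ := hx 0
        obtain ⟨y, hy, hyx⟩ := Finset.mem_image.1 (hA₀sub hx0)
        have : y = x := by
          funext i
          have hi : i = 0 := Fin.fin_one_eq_zero i
          rw [hi]; exact hyx
        rwa [← this]
      · intro i
        have hi : i.val = 0 := by omega
        rcases hcons.1 i hi with h | h
        · left; intro x y _ _ hne hlt
          exact h x y (fun j => Finset.mem_univ _) (fun j => Finset.mem_univ _) hne hlt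
        · right; intro x y _ _ hne hlt
          exact h x y (fun j => Finset.mem_univ _) (fun j => Finset.mem_univ _) hne hlt
    · -- main case : dimension d+1, d ≥ 1
      have hk1 : (1:ℝ) ≤ (k:ℝ) := by exact_mod_cast hk
      set G' : ℕ := 2 * 15 ^ (d - 1) * k ^ (d - 1) with hG'
      have hGc : 2 * 15 ^ d * k ^ d = 15 * k * G' := by
        rw [hG']
        obtain ⟨e, he⟩ : ∃ e, d = e + 1 := ⟨d - 1, (Nat.succ_pred_eq_of_pos hd0).symm⟩
        subst he
        simp only [Nat.add_sub_cancel, pow_succ]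
        ring
      rw [mbx_zpow_neg, hGc] at hN
      have hG'2 : 2 ≤ G' := by
        have h15 : 1 ≤ 15 ^ (d-1) := Nat.one_le_pow _ _ (by omega)
        have hkp : 1 ≤ k ^ (d-1) := Nat.one_le_pow _ _ hk
        calc 2 = 2 * 1 * 1 := by ring
        _ ≤ 2 * 15 ^ (d-1) * k ^ (d-1) := Nat.mul_le_mul (Nat.mul_le_mul_left 2 h15) hkp
      have hm30 : 30 ≤ 15 * k * G' := by
        have : 15 * 1 * 2 ≤ 15 * k * G' := Nat.mul_le_mul (Nat.mul_le_mul_left 15 hk) hG'2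
        omega
      have hN1 : (1:ℝ) ≤ (N:ℝ) := by
        refine le_trans ?_ hN
        have h1ε : (1:ℝ) ≤ 1/ε := by
          rw [le_div_iff₀ hε0]; linarith
        have h1 : (1:ℝ) ≤ (1/ε)^(15*k*G') := one_le_pow₀ h1ε
        have h2 : (1:ℝ) ≤ (k:ℝ)^(15*k*G') := one_le_pow₀ hk1
        nlinarith
      have hN0 : 0 < N := by exact_mod_cast lt_of_lt_of_le zero_lt_one hN1
      have hN2 : 4 * (k:ℝ)^2 ≤ ε * N := mbx_num1 hε0 hε hk1 (by omega) hN
      have hkN : k ≤ N := by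
        have h : (k:ℝ) ≤ (N:ℝ) := by nlinarith
        exact_mod_cast h
      -- the rows of each column that lie in S
      set a₀ : Fin N := ⟨0, hN0⟩ with ha₀
      set R : (Fin d → Fin N) → Finset (Fin N) :=
        fun u => Finset.univ.filter (fun a => Fin.snoc u a ∈ S) with hR
      have hcardsum : (S.card : ℝ) = ∑ u : Fin d → Fin N, ((R u).card : ℝ) := by
        have h := Finset.card_eq_sum_card_fiberwise
          (f := fun x : Fin (d+1) → Fin N => Fin.init x) (s := S) (t := Finset.univ)
          (fun x _ => Finset.mem_univ _)
        have h2 : ∀ u : Fin d → Fin N,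
            (S.filter (fun x => Fin.init x = u)).card = (R u).card := by
          intro u
          apply Finset.card_bij (fun x _ => x (Fin.last d))
          · intro x hx
            rw [Finset.mem_filter] at hx
            rw [hR, Finset.mem_filter]
            refine ⟨Finset.mem_univ _, ?_⟩
            rw [← hx.2, Fin.snoc_init_self]
            exact hx.1
          · intro x hx y hy hxy
            rw [Finset.mem_filter] at hx hy
            funext i
            induction i using Fin.lastCases with
            | last => exact hxy
            | cast j =>
              have := congrFun (hx.2.trans hy.2.symm) j
              exact this
          · intro a ha
            rw [hR, Finset.mem_filter] at ha
            refine ⟨Fin.snoc u a, ?_, ?_⟩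
            · rw [Finset.mem_filter]
              exact ⟨ha.2, by simp⟩
            · simp
        rw [h]
        push_cast
        exact Finset.sum_congr rfl (fun u _ => by rw [h2 u])
      set Good : Finset (Fin d → Fin N) :=
        Finset.univ.filter (fun u => (ε/2) * N ≤ ((R u).card : ℝ)) with hGood
      have hcardcols : ((Finset.univ : Finset (Fin d → Fin N))).card = N ^ d := by
        simp [Fintype.card_fun]
      have hGoodcard : (ε/2) * (N:ℝ)^d ≤ (Good.card : ℝ) := by
        have hsplit := Finset.sum_filter_add_sum_filter_not Finset.univ
          (fun u => (ε/2) * N ≤ ((R u).card : ℝ)) (fun u => ((R u).card : ℝ))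
        have hb1 : ∑ u ∈ Good, ((R u).card : ℝ) ≤ (Good.card : ℝ) * N := by
          have h := Finset.sum_le_card_nsmul Good (fun u => ((R u).card : ℝ)) N
            (fun u _ => by
              have hle : (R u).card ≤ N := le_trans (Finset.card_filter_le _ _) (by simp)
              show ((R u).card : ℝ) ≤ (N : ℝ)
              exact_mod_cast hle)
          rwa [nsmul_eq_mul] at h
        have hb2 : ∑ u ∈ Finset.univ.filter (fun u => ¬((ε/2) * N ≤ ((R u).card : ℝ))),
            ((R u).card : ℝ) ≤ (N:ℝ)^d * ((ε/2) * N) := by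
          have h := Finset.sum_le_card_nsmul
            (Finset.univ.filter (fun u => ¬((ε/2) * N ≤ ((R u).card : ℝ))))
            (fun u => ((R u).card : ℝ)) ((ε/2) * N)
            (fun u hu => by
              rw [Finset.mem_filter] at hu
              exact le_of_lt (not_le.1 hu.2))
          rw [nsmul_eq_mul] at h
          refine h.trans ?_
          have hNR0 : (0:ℝ) < N := by exact_mod_cast hN0
          have hcard : ((Finset.univ.filter
              (fun u => ¬((ε/2) * N ≤ ((R u).card : ℝ)))).card : ℝ) ≤ (N:ℝ)^d := by
            have h1 := Finset.card_filter_le (Finset.univ : Finset (Fin d → Fin N))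
              (fun u => ¬((ε/2) * N ≤ ((R u).card : ℝ)))
            rw [hcardcols] at h1
            exact_mod_cast h1
          apply mul_le_mul_of_nonneg_right hcard
          positivity
        have hkey : ε * (N:ℝ)^(d+1) ≤ (Good.card : ℝ) * N + (N:ℝ)^d * ((ε/2) * N) := by
          calc ε * (N:ℝ)^(d+1) ≤ (S.card : ℝ) := hS
          _ = ∑ u : Fin d → Fin N, ((R u).card : ℝ) := hcardsum
          _ = _ + _ := hsplit.symm
          _ ≤ (Good.card : ℝ) * N + (N:ℝ)^d * ((ε/2) * N) := add_le_add hb1 hb2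
        have hNR0 : (0:ℝ) < N := by exact_mod_cast hN0
        have hp : (N:ℝ)^(d+1) = (N:ℝ)^d * N := pow_succ _ _
        have h2 : (ε/2) * (N:ℝ)^d * N ≤ (Good.card : ℝ) * N := by nlinarith
        exact le_of_mul_le_mul_right h2 hNR0
      -- per-column monotone subset counts
      set Kc : ℕ := (k-1)*(k-1)+1 with hKc
      have hkKc : k ≤ Kc := by
        have h : ∀ n : ℕ, n ≤ n * n := by
          intro n
          rcases n with _ | j
          · omega
          · exact Nat.le_mul_of_pos_left _ (Nat.succ_pos j)
        have := h (k - 1)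
        omega
      have hKck2 : Kc ≤ k * k := by
        obtain ⟨j, rfl⟩ : ∃ j, k = j + 1 := ⟨k - 1, by omega⟩
        rw [hKc]
        simp only [Nat.add_sub_cancel]
        nlinarith
      set n₀ : ℕ := ⌈(ε/2) * (N:ℝ)⌉₊ with hn₀
      have hNR0 : (0:ℝ) < N := by exact_mod_cast hN0
      have hKcn₀ : Kc ≤ n₀ := by
        have h1 : ((Kc:ℕ):ℝ) ≤ (ε/2) * N := by
          have h2 : ((Kc:ℕ):ℝ) ≤ (k:ℝ)*(k:ℝ) := by exact_mod_cast hKck2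
          nlinarith
        have h2 := h1.trans (Nat.le_ceil ((ε/2) * (N:ℝ)))
        rw [hn₀]
        exact Nat.cast_le.mp h2
      have hn₀le : ∀ u ∈ Good, n₀ ≤ (R u).card := by
        intro u hu
        rw [hGood, Finset.mem_filter] at hu
        exact Nat.ceil_le.2 hu.2
      set ICC : (Fin d → Fin N) → Finset (Finset (Fin N)) := fun u =>
        ((R u).powersetCard k).filter (fun M => MBXChainUp (fun a => f (Fin.snoc u a)) M)
        with hICC
      set DCC : (Fin d → Fin N) → Finset (Finset (Fin N)) := fun u =>
        ((R u).powersetCard k).filter (fun M => MBXChainDown (fun a => f (Fin.snoc u a)) M)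
        with hDCC
      set CC : Bool → (Fin d → Fin N) → Finset (Finset (Fin N)) := fun bb u =>
        cond bb (ICC u) (DCC u) with hCC
      have hcount : ∀ u ∈ Good, n₀.choose k ≤ ((ICC u).card + (DCC u).card) * Kc.choose k := by
        intro u hu
        have hinj_u : Set.InjOn (fun a => f (Fin.snoc u a)) ↑(R u) := by
          intro a _ b _ hab
          have h := hf hab
          have h2 := congrFun h (Fin.last d)
          simpa using h2
        have hsup := mbx_supersat (fun a => f (Fin.snoc u a)) (R u) k hinj_u
          (le_trans hKcn₀ (hn₀le u hu))
        exact le_trans (Nat.choose_le_choose k (hn₀le u hu)) hsup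
      obtain ⟨bb, Gd, hGdGood, hGdhalf, hGdcnt⟩ :
          ∃ (bb : Bool) (Gd : Finset (Fin d → Fin N)), Gd ⊆ Good ∧
            Good.card ≤ 2 * Gd.card ∧
            ∀ u ∈ Gd, n₀.choose k ≤ ((CC bb u).card * (2 * Kc.choose k)) := by
        have hGIGD := Finset.card_filter_add_card_filter_not
          (s := Good) (p := fun u => (DCC u).card ≤ (ICC u).card)
        rcases le_or_gt ((Good.filter (fun u => (DCC u).card ≤ (ICC u).card)).card)
          ((Good.filter (fun u => ¬((DCC u).card ≤ (ICC u).card))).card) with hle | hlt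
        · refine ⟨false, Good.filter (fun u => ¬((DCC u).card ≤ (ICC u).card)),
            Finset.filter_subset _ _, by omega, ?_⟩
          intro u hu
          rw [Finset.mem_filter] at hu
          have h := hcount u hu.1
          have h2 : (ICC u).card ≤ (DCC u).card := le_of_lt (not_le.1 hu.2)
          calc n₀.choose k ≤ ((ICC u).card + (DCC u).card) * Kc.choose k := h
          _ ≤ (2 * (DCC u).card) * Kc.choose k := Nat.mul_le_mul_right _ (by omega)
          _ = (CC false u).card * (2 * Kc.choose k) := by
              show 2 * (DCC u).card * Kc.choose k = (DCC u).card * (2 * Kc.choose k)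
              ring
        · refine ⟨true, Good.filter (fun u => (DCC u).card ≤ (ICC u).card),
            Finset.filter_subset _ _, by omega, ?_⟩
          intro u hu
          rw [Finset.mem_filter] at hu
          have h := hcount u hu.1
          calc n₀.choose k ≤ ((ICC u).card + (DCC u).card) * Kc.choose k := h
          _ ≤ (2 * (ICC u).card) * Kc.choose k := Nat.mul_le_mul_right _ (by omega)
          _ = (CC true u).card * (2 * Kc.choose k) := by
              show 2 * (ICC u).card * Kc.choose k = (ICC u).card * (2 * Kc.choose k)
              ring
      have hGdcard : (ε/4) * (N:ℝ)^d ≤ (Gd.card : ℝ) := by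
        have h : (Good.card : ℝ) ≤ 2 * (Gd.card : ℝ) := by exact_mod_cast hGdhalf
        have hNd0 : (0:ℝ) ≤ (N:ℝ)^d := by positivity
        nlinarith
      -- pigeonhole over k-subsets
      set 𝒦 : Finset (Finset (Fin N)) := Finset.powersetCard k Finset.univ with h𝒦
      have h𝒦card : 𝒦.card = N.choose k := by
        rw [h𝒦, Finset.card_powersetCard, Finset.card_univ, Fintype.card_fin]
      have hCCsub : ∀ bb' u, CC bb' u ⊆ 𝒦 := by
        intro bb' u M hM
        have hM' : M ∈ (R u).powersetCard k := by
          cases bb'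
          · exact (Finset.mem_filter.1 hM).1
          · exact (Finset.mem_filter.1 hM).1
        rw [Finset.mem_powersetCard] at hM'
        rw [h𝒦, Finset.mem_powersetCard]
        exact ⟨Finset.subset_univ _, hM'.2⟩
      have hWsum : ∑ M ∈ 𝒦, (Gd.filter (fun u => M ∈ CC bb u)).card
          = ∑ u ∈ Gd, (CC bb u).card := by
        calc ∑ M ∈ 𝒦, (Gd.filter (fun u => M ∈ CC bb u)).card
            = ∑ M ∈ 𝒦, ∑ u ∈ Gd, if M ∈ CC bb u then 1 else 0 :=
              Finset.sum_congr rfl (fun M _ => Finset.card_filter _ _)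
          _ = ∑ u ∈ Gd, ∑ M ∈ 𝒦, if M ∈ CC bb u then 1 else 0 := Finset.sum_comm
          _ = ∑ u ∈ Gd, (CC bb u).card := by
              refine Finset.sum_congr rfl (fun u _ => ?_)
              rw [← Finset.card_filter]
              congr 1
              rw [Finset.filter_mem_eq_inter, Finset.inter_eq_right.mpr (hCCsub bb u)]
      -- the density passed to the induction
      set ε₂ : ℝ := ε^(k+1)/(4^(k+2)*(k:ℝ)^(2*k)) with hε₂
      have hε₂0 : 0 < ε₂ := by rw [hε₂]; positivity
      have hfac : (0:ℝ) < (k.factorial : ℝ) := by exact_mod_cast k.factorial_pos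
      have hKchpos : 0 < Kc.choose k := Nat.choose_pos hkKc
      have hch1 : ((N.choose k : ℕ):ℝ) ≤ (N:ℝ)^k / (k.factorial : ℝ) := by
        have := Nat.choose_le_pow_div (α := ℝ) k N
        push_cast at this ⊢
        exact this
      have hch2 : (((n₀+1-k : ℕ) : ℝ))^k / (k.factorial : ℝ) ≤ ((n₀.choose k : ℕ) : ℝ) := by
        have := Nat.pow_le_choose (α := ℝ) k n₀
        push_cast at this ⊢
        exact this
      have hch3 : ((Kc.choose k : ℕ):ℝ) ≤ (k:ℝ)^(2*k) := by
        have h1 : Kc.choose k ≤ Kc^k := Nat.choose_le_pow Kc k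
        have h2 : Kc^k ≤ (k*k)^k := Nat.pow_le_pow_left hKck2 k
        have h3 : (k*k)^k = k^(2*k) := by
          rw [show k*k = k^2 by ring, ← pow_mul]
        have h4 : Kc.choose k ≤ k^(2*k) := by omega
        exact_mod_cast h4
      have hn₀R : (ε/2) * (N:ℝ) ≤ (n₀ : ℝ) := by rw [hn₀]; exact Nat.le_ceil _
      have hkεN : (k:ℝ) ≤ (ε/4) * N := by nlinarith
      have hkn₀ : k ≤ n₀ := by
        have h : (k:ℝ) ≤ (n₀:ℝ) := by nlinarith
        exact_mod_cast h
      have hch4 : (ε/4) * (N:ℝ) ≤ ((n₀+1-k : ℕ) : ℝ) := by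
        have hsub : k ≤ n₀ + 1 := by omega
        rw [Nat.cast_sub hsub]
        push_cast
        linarith
      have hN3 : ε₂ * ((N.choose k : ℕ) : ℝ) * (2*((Kc.choose k : ℕ):ℝ)) ≤
          (ε/4) * ((n₀.choose k : ℕ) : ℝ) := by
        have hε₂nn : (0:ℝ) ≤ ε₂ := hε₂0.le
        have e1 : ε₂ * ((N:ℝ)^k / (k.factorial:ℝ)) * (2*(k:ℝ)^(2*k))
            = 2 * ε^(k+1) * (N:ℝ)^k / (4^(k+2) * (k.factorial:ℝ)) := by
          rw [hε₂]
          have hkk : ((k:ℝ))^(2*k) ≠ 0 := by positivity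
          field_simp
        have e2 : (ε/4) * (((ε/4) * (N:ℝ))^k / (k.factorial:ℝ))
            = ε^(k+1) * (N:ℝ)^k / (4^(k+1) * (k.factorial:ℝ)) := by
          rw [mul_pow, div_pow]
          field_simp
          ring
        have e3 : 2 * ε^(k+1) * (N:ℝ)^k / (4^(k+2) * (k.factorial:ℝ)) ≤
            ε^(k+1) * (N:ℝ)^k / (4^(k+1) * (k.factorial:ℝ)) := by
          rw [div_le_div_iff₀ (by positivity) (by positivity)]
          have h42 : (4:ℝ)^(k+2) = 4 * 4^(k+1) := by rw [pow_succ]; ring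
          rw [h42]
          have hp1 : (0:ℝ) < 4^(k+1) := by positivity
          have hp2 : (0:ℝ) ≤ ε^(k+1) * (N:ℝ)^k := by positivity
          nlinarith [mul_nonneg hp2 (mul_nonneg hp1.le hfac.le)]
        calc ε₂ * ((N.choose k : ℕ) : ℝ) * (2*((Kc.choose k : ℕ):ℝ))
            ≤ ε₂ * ((N:ℝ)^k / (k.factorial:ℝ)) * (2*(k:ℝ)^(2*k)) := by
              apply mul_le_mul
              · exact mul_le_mul_of_nonneg_left hch1 hε₂nn
              · linarith
              · positivity
              · positivity
          _ ≤ ε^(k+1) * (N:ℝ)^k / (4^(k+1) * (k.factorial:ℝ)) := by rw [e1]; exact e3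
          _ = (ε/4) * (((ε/4) * (N:ℝ))^k / (k.factorial:ℝ)) := e2.symm
          _ ≤ (ε/4) * ((((n₀+1-k : ℕ) : ℝ))^k / (k.factorial:ℝ)) := by
              gcongr
          _ ≤ (ε/4) * ((n₀.choose k : ℕ) : ℝ) :=
              mul_le_mul_of_nonneg_left hch2 (by positivity)
      have h𝒦ne : 𝒦.Nonempty := by
        rw [← Finset.card_pos, h𝒦card]
        exact Nat.choose_pos hkN
      have hsum_lower : ∑ M ∈ 𝒦, (ε₂ * (N:ℝ)^d) ≤
          ∑ M ∈ 𝒦, ((Gd.filter (fun u => M ∈ CC bb u)).card : ℝ) := by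
        have hws : (∑ M ∈ 𝒦, ((Gd.filter (fun u => M ∈ CC bb u)).card : ℝ))
            = ∑ u ∈ Gd, ((CC bb u).card : ℝ) := by exact_mod_cast hWsum
        rw [hws, Finset.sum_const, nsmul_eq_mul, h𝒦card]
        have hKpos : (0:ℝ) < 2*((Kc.choose k : ℕ):ℝ) := by
          have : (0:ℝ) < ((Kc.choose k : ℕ):ℝ) := by exact_mod_cast hKchpos
          linarith
        have hper : ∀ u ∈ Gd, ((n₀.choose k : ℕ) : ℝ) / (2*((Kc.choose k : ℕ):ℝ))
            ≤ ((CC bb u).card : ℝ) := by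
          intro u hu
          rw [div_le_iff₀ hKpos]
          exact_mod_cast hGdcnt u hu
        have hsum2 := Finset.card_nsmul_le_sum Gd _ _ hper
        rw [nsmul_eq_mul] at hsum2
        refine le_trans ?_ hsum2
        rw [mul_div_assoc'] -- Gd.card * (x/y) = (Gd.card * x)/y
        rw [le_div_iff₀ hKpos]
        have hND : (0:ℝ) ≤ (N:ℝ)^d := by positivity
        have hn₀chnn : (0:ℝ) ≤ ((n₀.choose k : ℕ) : ℝ) := by positivity
        calc (N.choose k : ℝ) * (ε₂ * (N:ℝ)^d) * (2*((Kc.choose k : ℕ):ℝ))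
            = (ε₂ * ((N.choose k : ℕ):ℝ) * (2*((Kc.choose k : ℕ):ℝ))) * (N:ℝ)^d := by ring
          _ ≤ ((ε/4) * ((n₀.choose k : ℕ) : ℝ)) * (N:ℝ)^d :=
              mul_le_mul_of_nonneg_right hN3 hND
          _ = ((ε/4) * (N:ℝ)^d) * ((n₀.choose k : ℕ) : ℝ) := by ring
          _ ≤ (Gd.card : ℝ) * ((n₀.choose k : ℕ) : ℝ) :=
              mul_le_mul_of_nonneg_right hGdcard hn₀chnn
      obtain ⟨MM, hMM𝒦, hMMbig⟩ := Finset.exists_le_of_sum_le h𝒦ne hsum_lower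
      set T : Finset (Fin d → Fin N) := Gd.filter (fun u => MM ∈ CC bb u) with hT
      have hTcard : ε₂ * (N:ℝ)^d ≤ (T.card : ℝ) := hMMbig
      have hMMcard : MM.card = k := by
        rw [h𝒦, Finset.mem_powersetCard] at hMM𝒦
        exact hMM𝒦.2
      -- slice array in dimension d
      set g : (Fin d → Fin N) → ℝ := fun u => f (Fin.snoc u a₀) with hgdef
      have hginj : Function.Injective g := by
        intro u u' h
        have h2 := hf h
        funext i
        have h3 := congrFun h2 (Fin.castSucc i)
        simpa using h3
      have hcmp : ∀ (u w : Fin d → Fin N) (a : Fin N),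
          (f (Fin.snoc u a) < f (Fin.snoc w a) ↔ g u < g w) := by
        intro u w a
        refine hcons.2 (⟨d-1, by omega⟩ : Fin (d+1)) (Fin.snoc u a) (Fin.snoc w a)
          (Fin.snoc u a₀) (Fin.snoc w a₀)
          (fun _ => Finset.mem_univ _) (fun _ => Finset.mem_univ _)
          (fun _ => Finset.mem_univ _) (fun _ => Finset.mem_univ _) ?_ ?_ ?_ ?_
        · intro j
          induction j using Fin.lastCases with
          | last => intro _; simp
          | cast j' =>
            intro hj
            exfalso
            rw [Fin.lt_def] at hj
            have h2 := j'.isLt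
            simp only [Fin.coe_castSucc] at hj
            omega
        · intro j
          induction j using Fin.lastCases with
          | last => intro _; simp
          | cast j' =>
            intro hj
            exfalso
            rw [Fin.lt_def] at hj
            have h2 := j'.isLt
            simp only [Fin.coe_castSucc] at hj
            omega
        · intro j
          induction j using Fin.lastCases with
          | last =>
            intro hj
            exfalso
            rw [Fin.le_def] at hj
            simp only [Fin.val_last] at hj
            omega
          | cast j' => intro _; simp
        · intro j
          induction j using Fin.lastCases with
          | last =>
            intro hj
            exfalso
            rw [Fin.le_def] at hj
            simp only [Fin.val_last] at hj
            omega
          | cast j' => intro _; simp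
      have hconsg : ConsistentArrayOn g (fun _ => Finset.univ) := by
        constructor
        · intro i hi
          have hi' : (Fin.castSucc i).val = 0 := by simpa using hi
          have hagg : ∀ (x y : Fin d → Fin N), (∀ j : Fin d, j ≠ i → x j = y j) →
              ∀ j : Fin (d+1), j ≠ Fin.castSucc i → (Fin.snoc x a₀ : Fin (d+1) → Fin N) j = (Fin.snoc y a₀ : Fin (d+1) → Fin N) j := by
            intro x y hne j
            induction j using Fin.lastCases with
            | last => intro _; simp
            | cast j' =>
              intro hj
              have hj' : j' ≠ i := fun h' => hj (by rw [h'])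
              simp only [Fin.snoc_castSucc]
              exact hne j' hj'
          rcases hcons.1 (Fin.castSucc i) hi' with h | h
          · left
            intro x y _ _ hne hlt
            refine h (Fin.snoc x a₀) (Fin.snoc y a₀) (fun _ => Finset.mem_univ _)
              (fun _ => Finset.mem_univ _) (hagg x y hne) ?_
            simpa [Fin.snoc_castSucc] using hlt
          · right
            intro x y _ _ hne hlt
            refine h (Fin.snoc x a₀) (Fin.snoc y a₀) (fun _ => Finset.mem_univ _)
              (fun _ => Finset.mem_univ _) (hagg x y hne) ?_
            simpa [Fin.snoc_castSucc] using hlt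
        · intro i x y x' y' _ _ _ _ hxy hxy' hxx' hyy'
          have hup : ∀ (x y : Fin d → Fin N), (∀ j : Fin d, i < j → x j = y j) →
              ∀ j : Fin (d+1), Fin.castSucc i < j → (Fin.snoc x a₀ : Fin (d+1) → Fin N) j = (Fin.snoc y a₀ : Fin (d+1) → Fin N) j := by
            intro x y hcnd j
            induction j using Fin.lastCases with
            | last => intro _; simp
            | cast j' =>
              intro hj
              rw [Fin.castSucc_lt_castSucc_iff] at hj
              simp only [Fin.snoc_castSucc]
              exact hcnd j' hj
          have hdn : ∀ (x y : Fin d → Fin N), (∀ j : Fin d, j ≤ i → x j = y j) →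
              ∀ j : Fin (d+1), j ≤ Fin.castSucc i → (Fin.snoc x a₀ : Fin (d+1) → Fin N) j = (Fin.snoc y a₀ : Fin (d+1) → Fin N) j := by
            intro x y hcnd j
            induction j using Fin.lastCases with
            | last =>
              intro hj
              exact absurd hj (not_le.2 (Fin.castSucc_lt_last i))
            | cast j' =>
              intro hj
              rw [Fin.castSucc_le_castSucc_iff] at hj
              simp only [Fin.snoc_castSucc]
              exact hcnd j' hj
          exact hcons.2 (Fin.castSucc i) (Fin.snoc x a₀) (Fin.snoc y a₀)
            (Fin.snoc x' a₀) (Fin.snoc y' a₀)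
            (fun _ => Finset.mem_univ _) (fun _ => Finset.mem_univ _)
            (fun _ => Finset.mem_univ _) (fun _ => Finset.mem_univ _)
            (hup x y hxy) (hup x' y' hxy') (hdn x x' hxx') (hdn y y' hyy')
      -- apply the induction hypothesis
      have hN₂ : ε₂ ^ (-(G' : ℤ)) * (k:ℝ)^G' ≤ (N:ℝ) := by
        rw [mbx_zpow_neg, hε₂]
        exact mbx_num_rec hε0 hε k hk (N:ℝ) G' hN
      have hε₂half : ε₂ < 1/2 := by
        have h1 : ε^(k+1) ≤ ε := pow_le_of_le_one hε0.le (by linarith) (by omega)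
        have h2 : (1:ℝ) ≤ 4^(k+2)*(k:ℝ)^(2*k) := by
          have h3 : (1:ℝ) ≤ 4^(k+2) := one_le_pow₀ (by norm_num)
          have h4 : (1:ℝ) ≤ (k:ℝ)^(2*k) := one_le_pow₀ hk1
          nlinarith
        have h3 : ε₂ ≤ ε^(k+1) := by
          rw [hε₂]
          exact div_le_self (by positivity) h2
        linarith
      obtain ⟨A', hA'card, hA'box, hA'mono⟩ :=
        ih hd0 ε₂ hε₂0 hε₂half N hN₂ g hginj hconsg T hTcard
      have hinitbox : ∀ x : Fin (d+1) → Fin N, InBox (Fin.snoc A' MM) x →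
          InBox A' (Fin.init x) := by
        intro x hx j
        have h := hx (Fin.castSucc j)
        rwa [Fin.snoc_castSucc] at h
      refine ⟨Fin.snoc A' MM, ?_, ?_, ?_⟩
      · intro i
        induction i using Fin.lastCases with
        | last => rw [Fin.snoc_last]; exact hMMcard
        | cast i' => rw [Fin.snoc_castSucc]; exact hA'card i'
      · intro x hx
        have hinit := hinitbox x hx
        have hTm := hA'box _ hinit
        rw [hT, Finset.mem_filter] at hTm
        have hMMin : MM ∈ CC bb (Fin.init x) := hTm.2
        have hMMR : MM ⊆ R (Fin.init x) := by
          have h' : MM ∈ (R (Fin.init x)).powersetCard k := by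
            cases bb
            · exact (Finset.mem_filter.1 hMMin).1
            · exact (Finset.mem_filter.1 hMMin).1
          exact (Finset.mem_powersetCard.1 h').1
        have hxl : x (Fin.last d) ∈ MM := by
          have h := hx (Fin.last d)
          rwa [Fin.snoc_last] at h
        have h := hMMR hxl
        rw [hR, Finset.mem_filter] at h
        have h2 := h.2
        rwa [Fin.snoc_init_self] at h2
      · intro i
        induction i using Fin.lastCases with
        | last =>
          have hlast : ∀ x y : Fin (d+1) → Fin N, InBox (Fin.snoc A' MM) x →
              InBox (Fin.snoc A' MM) y →
              (∀ j : Fin (d+1), j ≠ Fin.last d → x j = y j) →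
              x (Fin.last d) < y (Fin.last d) →
              (bb = true → f x < f y) ∧ (bb = false → f y < f x) := by
            intro x y hx hy hagree hlt
            have hinitx := hinitbox x hx
            have hyx : Fin.init y = Fin.init x := by
              funext j
              exact (hagree (Fin.castSucc j) (Fin.castSucc_lt_last j).ne).symm
            have hTm := hA'box _ hinitx
            rw [hT, Finset.mem_filter] at hTm
            have hMMin : MM ∈ CC bb (Fin.init x) := hTm.2
            have hxm : x (Fin.last d) ∈ MM := by
              have h := hx (Fin.last d); rwa [Fin.snoc_last] at h
            have hym : y (Fin.last d) ∈ MM := by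
              have h := hy (Fin.last d); rwa [Fin.snoc_last] at h
            have hxs : Fin.snoc (Fin.init x) (x (Fin.last d)) = x := Fin.snoc_init_self x
            have hys : Fin.snoc (Fin.init x) (y (Fin.last d)) = y := by
              rw [← hyx]; exact Fin.snoc_init_self y
            constructor
            · intro hbb
              subst hbb
              have hch : MBXChainUp (fun a => f (Fin.snoc (Fin.init x) a)) MM :=
                (Finset.mem_filter.1 hMMin).2
              have h := hch _ hxm _ hym hlt
              beta_reduce at h
              rwa [hxs, hys] at h
            · intro hbb
              subst hbb
              have hch : MBXChainDown (fun a => f (Fin.snoc (Fin.init x) a)) MM :=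
                (Finset.mem_filter.1 hMMin).2
              have h := hch _ hxm _ hym hlt
              beta_reduce at h
              rwa [hxs, hys] at h
          cases bb
          · right
            intro x y hx hy hagree hlt
            exact (hlast x y hx hy hagree hlt).2 rfl
          · left
            intro x y hx hy hagree hlt
            exact (hlast x y hx hy hagree hlt).1 rfl
        | cast i₀ =>
          have hsetup : ∀ x y : Fin (d+1) → Fin N, InBox (Fin.snoc A' MM) x →
              InBox (Fin.snoc A' MM) y →
              (∀ j : Fin (d+1), j ≠ Fin.castSucc i₀ → x j = y j) →
              x (Fin.castSucc i₀) < y (Fin.castSucc i₀) →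
              InBox A' (Fin.init x) ∧ InBox A' (Fin.init y) ∧
              (∀ j : Fin d, j ≠ i₀ → Fin.init x j = Fin.init y j) ∧
              Fin.init x i₀ < Fin.init y i₀ ∧
              Fin.snoc (Fin.init x) (x (Fin.last d)) = x ∧
              Fin.snoc (Fin.init y) (x (Fin.last d)) = y := by
            intro x y hx hy hagree hlt
            have hlast_eq : x (Fin.last d) = y (Fin.last d) :=
              hagree (Fin.last d) (Fin.castSucc_lt_last i₀).ne'
            refine ⟨hinitbox x hx, hinitbox y hy, ?_, hlt, Fin.snoc_init_self x, ?_⟩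
            · intro j hj
              exact hagree (Fin.castSucc j) (fun hcc => hj (Fin.castSucc_injective d hcc))
            · rw [hlast_eq]
              exact Fin.snoc_init_self y
          rcases hA'mono i₀ with h | h
          · left
            intro x y hx hy hagree hlt
            obtain ⟨h1, h2, h3, h4, h5, h6⟩ := hsetup x y hx hy hagree hlt
            have hg := h (Fin.init x) (Fin.init y) h1 h2 h3 h4
            have hiff := hcmp (Fin.init x) (Fin.init y) (x (Fin.last d))
            rw [h5, h6] at hiff
            exact hiff.2 hg
          · right
            intro x y hx hy hagree hlt
            obtain ⟨h1, h2, h3, h4, h5, h6⟩ := hsetup x y hx hy hagree hlt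
            have hg := h (Fin.init x) (Fin.init y) h1 h2 h3 h4
            have hiff := hcmp (Fin.init y) (Fin.init x) (x (Fin.last d))
            rw [h5, h6] at hiff
            exact hiff.2 hg
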